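/- In the theory of pure equality (no function symbols), if A and B are conjunctions of ground (dis)equations between constants with A ∧ B unsatisfiable, then there exists a ground formula I over the constants common to A and B (a Boolean combination of equations between common constants) such that every model of A satisfies I and I ∧ B is unsatisfiable. -/

import Mathlib

/-- A ground literal of the theory of pure equality: a possibly negated equation
between constants. -/
structure EqLit (C : Type) : Type where
  pos : Bool
  lhs : C
  rhs : C

/-- Truth of a ground equality literal under an interpretation `v : C → α`. -/
def EqLit.holds {C α : Type} (v : C → α) (l : EqLit C) : Prop :=
  if l.pos then v l.lhs = v l.rhs else v l.lhs ≠ v l.rhs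

/-- The constants occurring in a conjunction (list) of equality literals. -/
def eqLitConsts {C : Type} (A : List (EqLit C)) : Set C :=
  { c | ∃ l ∈ A, l.lhs = c ∨ l.rhs = c }

/-- Ground formulas of pure equality: Boolean combinations of equations between
constants. -/
inductive EqFm (C : Type) : Type
  | eq : C → C → EqFm C
  | not : EqFm C → EqFm C
  | and : EqFm C → EqFm C → EqFm C
  | or : EqFm C → EqFm C → EqFm C
  | tru : EqFm C
  | fls : EqFm C

/-- Truth of a ground equality formula under an interpretation `v : C → α`. -/
def EqFm.holds {C α : Type} (v : C → α) : EqFm C → Prop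
  | .eq c d => v c = v d
  | .not φ => ¬ φ.holds v
  | .and φ ψ => φ.holds v ∧ ψ.holds v
  | .or φ ψ => φ.holds v ∨ ψ.holds v
  | .tru => True
  | .fls => False

/-- The constants occurring in a ground equality formula. -/
def EqFm.consts {C : Type} : EqFm C → Set C
  | .eq c d => {c, d}
  | .not φ => φ.consts
  | .and φ ψ => φ.consts ∪ ψ.consts
  | .or φ ψ => φ.consts ∪ ψ.consts
  | .tru => ∅
  | .fls => ∅

namespace PureEqInterp

open Relation

variable {C : Type}

/-- Big conjunction of a list of formulas. -/
def bigAnd : List (EqFm C) → EqFm C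
  | [] => .tru
  | φ :: L => .and φ (bigAnd L)

theorem bigAnd_holds {α : Type} (v : C → α) (L : List (EqFm C)) :
    (bigAnd L).holds v ↔ ∀ φ ∈ L, φ.holds v := by
  induction L with
  | nil => simp [bigAnd, EqFm.holds]
  | cons φ L ih => simp [bigAnd, EqFm.holds, ih]

theorem bigAnd_consts (L : List (EqFm C)) :
    (bigAnd L).consts ⊆ {c | ∃ φ ∈ L, c ∈ φ.consts} := by
  induction L with
  | nil => simp [bigAnd, EqFm.consts]
  | cons φ L ih =>
      intro c hc
      simp only [bigAnd, EqFm.consts, Set.mem_union] at hc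
      rcases hc with h | h
      · exact ⟨φ, by simp, h⟩
      · rcases ih h with ⟨ψ, hψ, hcψ⟩
        exact ⟨ψ, by simp [hψ], hcψ⟩

/-- The constants of a list of literals, as a list. -/
def constsList (A : List (EqLit C)) : List C := A.flatMap fun l => [l.lhs, l.rhs]

theorem mem_constsList {A : List (EqLit C)} {c : C} :
    c ∈ constsList A ↔ c ∈ eqLitConsts A := by
  simp only [constsList, List.mem_flatMap, List.mem_cons, List.mem_singleton,
    List.not_mem_nil, or_false, eqLitConsts, Set.mem_setOf_eq]
  constructor
  · rintro ⟨l, hl, h | h⟩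
    · exact ⟨l, hl, Or.inl h.symm⟩
    · exact ⟨l, hl, Or.inr h.symm⟩
  · rintro ⟨l, hl, h | h⟩
    · exact ⟨l, hl, Or.inl h.symm⟩
    · exact ⟨l, hl, Or.inr h.symm⟩

/-- Positive (equational) literal relation of `A`. -/
def posRel (A : List (EqLit C)) (c d : C) : Prop :=
  ∃ l ∈ A, l.pos = true ∧ l.lhs = c ∧ l.rhs = d

/-- Equivalence generated by positive literals of `A`. -/
def eqvA (A : List (EqLit C)) : C → C → Prop := EqvGen (posRel A)

theorem eqvA_model {α : Type} {A : List (EqLit C)} {v : C → α}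
    (hv : ∀ l ∈ A, l.holds v) : ∀ {c d}, eqvA A c d → v c = v d := by
  intro c d h
  induction h with
  | rel c d h =>
      rcases h with ⟨l, hl, hp, h1, h2⟩
      have := hv l hl
      simp only [EqLit.holds, hp, if_true] at this
      rw [← h1, ← h2]; exact this
  | refl => rfl
  | symm _ _ _ ih => exact ih.symm
  | trans _ _ _ _ _ ih1 ih2 => exact ih1.trans ih2

theorem eqvA_consts {A : List (EqLit C)} : ∀ {c d}, eqvA A c d →
    c = d ∨ (c ∈ eqLitConsts A ∧ d ∈ eqLitConsts A) := by
  intro c d h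
  induction h with
  | rel c d h =>
      rcases h with ⟨l, hl, _, h1, h2⟩
      exact Or.inr ⟨⟨l, hl, Or.inl h1⟩, ⟨l, hl, Or.inr h2⟩⟩
  | refl => exact Or.inl rfl
  | symm _ _ _ ih =>
      rcases ih with rfl | ⟨h1, h2⟩
      · exact Or.inl rfl
      · exact Or.inr ⟨h2, h1⟩
  | trans x y z _ _ ih1 ih2 =>
      rcases ih1 with rfl | ⟨h1, h2⟩
      · exact ih2
      · rcases ih2 with rfl | ⟨h3, h4⟩
        · exact Or.inr ⟨h1, h2⟩
        · exact Or.inr ⟨h1, h4⟩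

/-- Negative (disequational) literal relation of `A` (unordered). -/
def negRel (A : List (EqLit C)) (c d : C) : Prop :=
  ∃ l ∈ A, l.pos = false ∧ ((l.lhs = c ∧ l.rhs = d) ∨ (l.lhs = d ∧ l.rhs = c))

/-- `c` and `d` are forced apart by `A`. -/
def dis (A : List (EqLit C)) (c d : C) : Prop :=
  ∃ c' d', eqvA A c c' ∧ eqvA A d d' ∧ negRel A c' d'

theorem dis_model {α : Type} {A : List (EqLit C)} {v : C → α}
    (hv : ∀ l ∈ A, l.holds v) {c d : C} (h : dis A c d) : v c ≠ v d := by
  rcases h with ⟨c', d', h1, h2, l, hl, hp, hor⟩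
  have hlv := hv l hl
  simp only [EqLit.holds, hp, if_false, Bool.false_eq_true] at hlv
  have e1 := eqvA_model hv h1
  have e2 := eqvA_model hv h2
  have hne : v c' ≠ v d' := by
    rcases hor with ⟨ha, hb⟩ | ⟨ha, hb⟩
    · rw [← ha, ← hb]; exact hlv
    · rw [← ha, ← hb]; exact fun h => hlv h.symm
  rw [e1, e2]; exact hne

open Classical in
/-- A single conjunct of the interpolant, for a pair of constants of `A`. -/
noncomputable def litFm (A B : List (EqLit C)) (c d : C) : EqFm C :=
  if c ∈ eqLitConsts B ∧ d ∈ eqLitConsts B then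
    if eqvA A c d then .eq c d
    else if dis A c d then .not (.eq c d) else .tru
  else .tru

/-- The interpolant. -/
noncomputable def interpolant (A B : List (EqLit C)) : EqFm C :=
  bigAnd (((constsList A).product (constsList A)).map fun p => litFm A B p.1 p.2)

theorem interpolant_consts (A B : List (EqLit C)) :
    (interpolant A B).consts ⊆ eqLitConsts A ∩ eqLitConsts B := by
  intro x hx
  rcases bigAnd_consts _ hx with ⟨φ, hφ, hxφ⟩
  rcases List.mem_map.mp hφ with ⟨⟨c, d⟩, hp, rfl⟩
  rcases List.pair_mem_product.mp hp with ⟨hc, hd⟩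
  have hcA : c ∈ eqLitConsts A := mem_constsList.mp hc
  have hdA : d ∈ eqLitConsts A := mem_constsList.mp hd
  unfold litFm at hxφ
  split_ifs at hxφ with h1 h2 h3
  · simp only [EqFm.consts, Set.mem_insert_iff, Set.mem_singleton_iff] at hxφ
    rcases hxφ with rfl | rfl
    · exact ⟨hcA, h1.1⟩
    · exact ⟨hdA, h1.2⟩
  · simp only [EqFm.consts, Set.mem_insert_iff, Set.mem_singleton_iff] at hxφ
    rcases hxφ with rfl | rfl
    · exact ⟨hcA, h1.1⟩
    · exact ⟨hdA, h1.2⟩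
  · simp [EqFm.consts] at hxφ
  · simp [EqFm.consts] at hxφ

theorem interpolant_model (A B : List (EqLit C)) {α : Type} (v : C → α)
    (hv : ∀ l ∈ A, l.holds v) : (interpolant A B).holds v := by
  rw [interpolant, bigAnd_holds]
  intro φ hφ
  rcases List.mem_map.mp hφ with ⟨⟨c, d⟩, _, rfl⟩
  unfold litFm
  split_ifs with h1 h2 h3
  · exact eqvA_model hv h2
  · exact dis_model hv h3
  · trivial
  · trivial

/-- Key extraction: the interpolant forces common constants equivalent under `A`
to be equal. -/
theorem interpolant_eqKey {A B : List (EqLit C)} {α : Type} {v : C → α}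
    (hI : (interpolant A B).holds v) {c d : C}
    (hcA : c ∈ eqLitConsts A) (hdA : d ∈ eqLitConsts A)
    (hcB : c ∈ eqLitConsts B) (hdB : d ∈ eqLitConsts B)
    (h : eqvA A c d) : v c = v d := by
  have hmem : litFm A B c d ∈
      (((constsList A).product (constsList A)).map fun p => litFm A B p.1 p.2) :=
    List.mem_map.mpr ⟨(c, d),
      List.pair_mem_product.mpr ⟨mem_constsList.mpr hcA, mem_constsList.mpr hdA⟩, rfl⟩
  have hf : (litFm A B c d).holds v := ((bigAnd_holds v _).mp hI) _ hmem
  unfold litFm at hf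
  rw [if_pos ⟨hcB, hdB⟩, if_pos h] at hf
  exact hf

/-- Key extraction: the interpolant forces common constants separated by `A` apart. -/
theorem interpolant_neKey {A B : List (EqLit C)} {α : Type} {v : C → α}
    (hI : (interpolant A B).holds v) {c d : C}
    (hcA : c ∈ eqLitConsts A) (hdA : d ∈ eqLitConsts A)
    (hcB : c ∈ eqLitConsts B) (hdB : d ∈ eqLitConsts B)
    (hne : ¬ eqvA A c d) (h : dis A c d) : v c ≠ v d := by
  have hmem : litFm A B c d ∈
      (((constsList A).product (constsList A)).map fun p => litFm A B p.1 p.2) :=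
    List.mem_map.mpr ⟨(c, d),
      List.pair_mem_product.mpr ⟨mem_constsList.mpr hcA, mem_constsList.mpr hdA⟩, rfl⟩
  have hf : (litFm A B c d).holds v := ((bigAnd_holds v _).mp hI) _ hmem
  unfold litFm at hf
  rw [if_pos ⟨hcB, hdB⟩, if_neg hne, if_pos h] at hf
  exact hf

/-- Normal form for the amalgamated equivalence. -/
def good (A B : List (EqLit C)) {α : Type} (v : C → α) (c d : C) : Prop :=
  eqvA A c d ∨ ∃ c' d', eqvA A c c' ∧ eqvA A d d' ∧
    c' ∈ eqLitConsts B ∧ d' ∈ eqLitConsts B ∧ v c' = v d'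

theorem good_of_eqvGen {A B : List (EqLit C)} {α : Type} {v : C → α}
    (eqKey : ∀ c d : C, c ∈ eqLitConsts A → d ∈ eqLitConsts A →
      c ∈ eqLitConsts B → d ∈ eqLitConsts B → eqvA A c d → v c = v d)
    {c d : C}
    (h : EqvGen (fun x y => posRel A x y ∨
        (x ∈ eqLitConsts B ∧ y ∈ eqLitConsts B ∧ v x = v y)) c d) :
    good A B v c d := by
  induction h with
  | rel x y h =>
      rcases h with h | ⟨hx, hy, hv⟩
      · exact Or.inl (EqvGen.rel _ _ h)
      · exact Or.inr ⟨x, y, EqvGen.refl x, EqvGen.refl y, hx, hy, hv⟩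
  | refl x => exact Or.inl (EqvGen.refl x)
  | symm x y _ ih =>
      rcases ih with h | ⟨c', d', h1, h2, h3, h4, h5⟩
      · exact Or.inl (EqvGen.symm _ _ h)
      · exact Or.inr ⟨d', c', h2, h1, h4, h3, h5.symm⟩
  | trans x y z _ _ ih1 ih2 =>
      rcases ih1 with h | ⟨c1, d1, h1, h2, h3, h4, h5⟩
      · rcases ih2 with h' | ⟨c2, d2, g1, g2, g3, g4, g5⟩
        · exact Or.inl (EqvGen.trans _ _ _ h h')
        · exact Or.inr ⟨c2, d2, EqvGen.trans _ _ _ h g1, g2, g3, g4, g5⟩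
      · rcases ih2 with h' | ⟨c2, d2, g1, g2, g3, g4, g5⟩
        · exact Or.inr ⟨c1, d1, h1,
            EqvGen.trans _ _ _ (EqvGen.symm _ _ h') h2, h3, h4, h5⟩
        · -- bridge: v d1 = v c2
          have hbridge : v d1 = v c2 := by
            have he : eqvA A d1 c2 := EqvGen.trans _ _ _ (EqvGen.symm _ _ h2) g1
            rcases eqvA_consts he with rfl | ⟨hA1, hA2⟩
            · rfl
            · exact eqKey d1 c2 hA1 hA2 h4 g3 he
          exact Or.inr ⟨c1, d2, h1, g2, h3, g4, h5.trans (hbridge.trans g5)⟩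

end PureEqInterp


/-- Ground interpolation for the theory of pure equality (no function symbols):
if `A ∧ B` is unsatisfiable (over all sets `α` and interpretations of the constants),
then there is a ground formula `I` — a Boolean combination of equations between
constants common to `A` and `B` — such that every model of `A` satisfies `I` and
`I ∧ B` is unsatisfiable. -/
theorem pure_equality_ground_interpolation {C : Type} (A B : List (EqLit C))
    (hunsat : ¬ ∃ (α : Type) (v : C → α),
      (∀ l ∈ A, l.holds v) ∧ (∀ l ∈ B, l.holds v)) :
    ∃ I : EqFm C, I.consts ⊆ eqLitConsts A ∩ eqLitConsts B ∧
      (∀ (α : Type) (v : C → α), (∀ l ∈ A, l.holds v) → I.holds v) ∧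
      ¬ ∃ (α : Type) (v : C → α), (∀ l ∈ B, l.holds v) ∧ I.holds v := by
  classical
  open PureEqInterp Relation in
  by_cases hA : ∃ (α : Type) (v : C → α), ∀ l ∈ A, l.holds v
  case neg =>
    refine ⟨.fls, by simp [EqFm.consts], ?_, ?_⟩
    · intro α v hv
      exact hA ⟨α, v, hv⟩
    · rintro ⟨α, v, -, h⟩
      exact h
  case pos =>
  refine ⟨interpolant A B, interpolant_consts A B,
    fun α v hv => interpolant_model A B v hv, ?_⟩
  rintro ⟨α, v, hvB, hvI⟩
  -- build a joint model of A and B, contradicting hunsat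
  obtain ⟨α0, v0, hv0⟩ := hA
  set R : C → C → Prop := fun x y => posRel A x y ∨
      (x ∈ eqLitConsts B ∧ y ∈ eqLitConsts B ∧ v x = v y) with hR
  have eqKey : ∀ c d : C, c ∈ eqLitConsts A → d ∈ eqLitConsts A →
      c ∈ eqLitConsts B → d ∈ eqLitConsts B → eqvA A c d → v c = v d :=
    fun c d h1 h2 h3 h4 h5 => interpolant_eqKey hvI h1 h2 h3 h4 h5
  have hgood : ∀ {c d : C}, Quot.mk R c = Quot.mk R d → good A B v c d := by
    intro c d h
    exact good_of_eqvGen eqKey (Quot.eq.mp h)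
  refine hunsat ⟨Quot R, Quot.mk R, ?_, ?_⟩
  · -- model of A
    intro l hl
    have hlhs : l.lhs ∈ eqLitConsts A := ⟨l, hl, Or.inl rfl⟩
    have hrhs : l.rhs ∈ eqLitConsts A := ⟨l, hl, Or.inr rfl⟩
    cases hp : l.pos with
    | true =>
        simp only [EqLit.holds, hp, if_true]
        exact Quot.sound (Or.inl ⟨l, hl, hp, rfl, rfl⟩)
    | false =>
        simp only [EqLit.holds, hp, if_false, Bool.false_eq_true]
        intro h
        rcases hgood h with he | ⟨c1, d1, h1, h2, h3, h4, h5⟩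
        · -- A is then unsatisfiable at (lhs, rhs); contradict model v0
          have := eqvA_model hv0 he
          have hl0 := hv0 l hl
          simp only [EqLit.holds, hp, if_false, Bool.false_eq_true] at hl0
          exact hl0 this
        · -- use the interpolant's disequality
          have hc1A : c1 ∈ eqLitConsts A := by
            rcases eqvA_consts h1 with rfl | ⟨_, h⟩
            · exact hlhs
            · exact h
          have hd1A : d1 ∈ eqLitConsts A := by
            rcases eqvA_consts h2 with rfl | ⟨_, h⟩
            · exact hrhs
            · exact h
          by_cases he : eqvA A c1 d1
          · -- then lhs ~A rhs, contradict model v0 again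
            have he' : eqvA A l.lhs l.rhs :=
              EqvGen.trans _ _ _ h1 (EqvGen.trans _ _ _ he (EqvGen.symm _ _ h2))
            have := eqvA_model hv0 he'
            have hl0 := hv0 l hl
            simp only [EqLit.holds, hp, if_false, Bool.false_eq_true] at hl0
            exact hl0 this
          · have hdis : dis A c1 d1 :=
              ⟨l.lhs, l.rhs, EqvGen.symm _ _ h1, EqvGen.symm _ _ h2,
                l, hl, hp, Or.inl ⟨rfl, rfl⟩⟩
            exact interpolant_neKey hvI hc1A hd1A h3 h4 he hdis h5
  · -- model of B
    intro l hl
    have hlhs : l.lhs ∈ eqLitConsts B := ⟨l, hl, Or.inl rfl⟩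
    have hrhs : l.rhs ∈ eqLitConsts B := ⟨l, hl, Or.inr rfl⟩
    have hlv := hvB l hl
    cases hp : l.pos with
    | true =>
        simp only [EqLit.holds, hp, if_true] at hlv ⊢
        exact Quot.sound (Or.inr ⟨hlhs, hrhs, hlv⟩)
    | false =>
        simp only [EqLit.holds, hp, if_false, Bool.false_eq_true] at hlv ⊢
        intro h
        rcases hgood h with he | ⟨c1, d1, h1, h2, h3, h4, h5⟩
        · rcases eqvA_consts he with heq | ⟨hA1, hA2⟩
          · exact hlv (congrArg v heq)
          · exact hlv (eqKey _ _ hA1 hA2 hlhs hrhs he)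
        · have e1 : v l.lhs = v c1 := by
            rcases eqvA_consts h1 with rfl | ⟨hA1, hA2⟩
            · rfl
            · exact eqKey _ _ hA1 hA2 hlhs h3 h1
          have e2 : v d1 = v l.rhs := by
            rcases eqvA_consts h2 with rfl | ⟨hA1, hA2⟩
            · rfl
            · exact eqKey _ _ hA2 hA1 h4 hrhs (EqvGen.symm _ _ h2)
          exact hlv (e1.trans (h5.trans e2))
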